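/- arXiv:1309.4706 — 2 statements merged into one kernel-verified Lean document; each statement's English description precedes it below -/
import Mathlib

section
/- For any x ∈ (0,2) and any dimension d ≥ 1, the integral ∫_T 1/((1/d)∑_{j=1}^d (cos θ_j + 1) - x)² dθ over the torus T = [-π,π]^d diverges (equals +∞). -/
open MeasureTheory Real Filter Set Topology

def torus (d : ℕ) : Set (Fin d → ℝ) :=
  Set.univ.pi fun _ => Set.Icc (-π) π

noncomputable def gfun (d : ℕ) (θ : Fin d → ℝ) : ℝ :=
  (1 / (d : ℝ)) * ∑ j, (Real.cos (θ j) + 1)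

open scoped ENNReal NNReal

lemma aux_one_dim (t a b : ℝ) (hta : a < t) (htb : t < b) :
    ∫⁻ s in Set.Icc a b, ENNReal.ofReal (((s - t)⁻¹) ^ 2) = ⊤ := by
  apply ENNReal.eq_top_of_forall_nnreal_le
  intro r
  set n : ℕ := ⌈(r : ℝ)⌉₊ with hn
  set ε : ℝ := min ((n : ℝ) + 1)⁻¹ (b - t) with hε
  have hbt : (0:ℝ) < b - t := by linarith
  have hεpos : 0 < ε := lt_min (by positivity) hbt
  have hεle : ε ≤ ((n : ℝ) + 1)⁻¹ := min_le_left _ _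
  have hinv : (n : ℝ) + 1 ≤ ε⁻¹ := by
    rw [← inv_inv ((n:ℝ)+1)]
    exact inv_anti₀ hεpos hεle
  have hr : (r : ℝ) ≤ ε⁻¹ := by
    have := Nat.le_ceil (r : ℝ)
    rw [← hn] at this
    linarith
  have hsub : Set.Ioo t (t + ε) ⊆ Set.Icc a b := by
    intro s hs
    have := min_le_right ((n : ℝ) + 1)⁻¹ (b - t)
    exact ⟨by linarith [hs.1], by linarith [hs.2, this]⟩
  calc (r : ℝ≥0∞) = ENNReal.ofReal r := ENNReal.ofReal_coe_nnreal.symm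
    _ ≤ ENNReal.ofReal (ε⁻¹) := ENNReal.ofReal_le_ofReal hr
    _ = ENNReal.ofReal ((ε⁻¹)^2) * volume (Set.Ioo t (t + ε)) := by
        rw [Real.volume_Ioo]
        rw [← ENNReal.ofReal_mul (by positivity)]
        congr 1
        field_simp
        ring
    _ = ∫⁻ s in Set.Ioo t (t + ε), ENNReal.ofReal ((ε⁻¹)^2) := by
        rw [setLIntegral_const]
    _ ≤ ∫⁻ s in Set.Ioo t (t + ε), ENNReal.ofReal (((s - t)⁻¹) ^ 2) := by
        apply setLIntegral_mono (by measurability)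
        intro s hs
        apply ENNReal.ofReal_le_ofReal
        have h1 : 0 < s - t := by linarith [hs.1]
        have h2 : s - t ≤ ε := by linarith [hs.2]
        have : ε⁻¹ ≤ (s - t)⁻¹ := inv_anti₀ h1 h2
        exact pow_le_pow_left₀ (by positivity) this 2
    _ ≤ ∫⁻ s in Set.Icc a b, ENNReal.ofReal (((s - t)⁻¹) ^ 2) :=
        lintegral_mono_set hsub

lemma cos_lip (a t : ℝ) : |Real.cos a - Real.cos t| ≤ |a - t| := by
  rw [Real.cos_sub_cos, abs_mul, abs_mul]
  have h1 : |Real.sin ((a+t)/2)| ≤ 1 := abs_le.2 ⟨Real.neg_one_le_sin _, Real.sin_le_one _⟩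
  have h2 : |Real.sin ((a-t)/2)| ≤ |a - t|/2 := by
    have h := Real.abs_sin_le_abs (x := (a-t)/2)
    rwa [abs_div, abs_two] at h
  have h4 : |(-2 : ℝ)| = 2 := by norm_num
  rw [h4]
  nlinarith [mul_le_mul h1 h2 (abs_nonneg (Real.sin ((a-t)/2))) zero_le_one,
    abs_nonneg (Real.sin ((a+t)/2)), abs_nonneg (Real.sin ((a-t)/2)), abs_nonneg (a - t)]

/-- For `x ∈ (0,2)` the integral `∫_T (g(θ) - x)⁻² dθ` diverges. -/
theorem divergence_inside_spectrum (d : ℕ) (hd : 1 ≤ d) (x : ℝ) (hx : x ∈ Set.Ioo (0 : ℝ) 2) :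
    ∫⁻ θ in torus d, ENNReal.ofReal (((gfun d θ - x)⁻¹) ^ 2) = ⊤ := by
  obtain ⟨n, rfl⟩ : ∃ n, d = n + 1 := ⟨d - 1, (Nat.succ_pred_eq_of_pos hd).symm⟩
  have hD : (0:ℝ) < (n:ℝ) + 1 := by positivity
  set e := MeasurableEquiv.piFinSuccAbove (fun _ : Fin (n+1) => ℝ) 0 with he
  have hmp : MeasurePreserving e volume volume :=
    volume_preserving_piFinSuccAbove (fun _ : Fin (n+1) => ℝ) 0
  have hesymm : ∀ p : ℝ × (Fin n → ℝ), e.symm p = Fin.cons p.1 p.2 := by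
    intro p
    simp [he, MeasurableEquiv.piFinSuccAbove_symm_apply, Fin.insertNth_zero', Fin.consEquiv]
  -- continuity of gfun
  have hgc : Continuous (gfun (n+1)) := by
    unfold gfun
    exact continuous_const.mul <| continuous_finset_sum _ fun j _ =>
      (Real.continuous_cos.comp (continuous_apply j)).add continuous_const
  set G : ℝ × (Fin n → ℝ) → ℝ≥0∞ :=
    fun p => ENNReal.ofReal (((gfun (n+1) (e.symm p) - x)⁻¹) ^ 2) with hGdef
  have hG : Measurable G :=
    ((((hgc.measurable.comp e.symm.measurable).sub measurable_const).inv.pow_const 2)).ennreal_ofReal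
  have he1 : ∀ θ : Fin (n+1) → ℝ, (e θ).1 = θ 0 := fun θ => rfl
  have he2 : ∀ (θ : Fin (n+1) → ℝ) (j : Fin n), (e θ).2 j = θ (Fin.succAbove 0 j) :=
    fun θ j => rfl
  have hpre : torus (n+1) = e ⁻¹' ((Set.Icc (-π) π) ×ˢ torus n) := by
    ext θ
    simp only [torus, Set.mem_preimage, Set.mem_prod, Set.mem_pi, Set.mem_univ, true_implies]
    constructor
    · intro h
      refine ⟨?_, ?_⟩
      · rw [he1]; exact h 0
      · intro j; rw [he2]; exact h _
    · rintro ⟨h0, h1⟩ i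
      rcases Fin.eq_zero_or_eq_succ i with rfl | ⟨j, rfl⟩
      · rw [← he1 θ]; exact h0
      · have hj := h1 j
        rw [he2] at hj
        rwa [Fin.succAbove_zero] at hj
  have key : ∫⁻ θ in torus (n+1), ENNReal.ofReal (((gfun (n+1) θ - x)⁻¹) ^ 2)
      = ∫⁻ p in (Set.Icc (-π) π) ×ˢ torus n, G p := by
    rw [hpre, ← MeasurePreserving.setLIntegral_comp_preimage_emb hmp
      e.measurableEmbedding G]
    apply lintegral_congr
    intro θ
    simp [hGdef]
  rw [key, Measure.volume_eq_prod, ← Measure.prod_restrict,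
    lintegral_prod_symm G hG.aemeasurable]
  -- now a Tonelli-reduced goal
  set h' : (Fin n → ℝ) → ℝ := fun θ' => (1 / ((n:ℝ)+1)) * ∑ j, (Real.cos (θ' j) + 1) with hh'
  have hh'c : Continuous h' := continuous_const.mul <| continuous_finset_sum _ fun j _ =>
    (Real.continuous_cos.comp (continuous_apply j)).add continuous_const
  set T₀ : Set (Fin n → ℝ) := torus n ∩ h' ⁻¹' Set.Ioo (x - 2/((n:ℝ)+1)) x with hT₀
  have hT₀meas : MeasurableSet T₀ :=
    (MeasurableSet.univ_pi fun _ => measurableSet_Icc).inter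
      (hh'c.measurable measurableSet_Ioo)
  -- positivity of measure of T₀
  have hT₀pos : 0 < volume T₀ := by
    obtain ⟨p, hp1, hp2⟩ : ∃ p : Fin n → ℝ, (∀ j, p j ∈ Set.Ioo (-π) π) ∧
        h' p ∈ Set.Ioo (x - 2/((n:ℝ)+1)) x := by
      rcases Nat.eq_zero_or_pos n with rfl | hn
      · refine ⟨Fin.elim0, fun j => j.elim0, ?_⟩
        have h0 : h' Fin.elim0 = 0 := by simp [hh']
        rw [h0, Set.mem_Ioo]
        have hone : ((0:ℕ):ℝ) + 1 = 1 := by norm_num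
        rw [hone]
        constructor
        · rw [div_one]
          linarith [hx.2]
        · exact hx.1
      · have hN : (0:ℝ) < (n:ℝ) := by exact_mod_cast hn
        have hlt : max 0 (x - 2/((n:ℝ)+1)) < min x (2*(n:ℝ)/((n:ℝ)+1)) := by
          rw [max_lt_iff, lt_min_iff, lt_min_iff]
          have h2D : 0 < 2/((n:ℝ)+1) := by positivity
          refine ⟨⟨hx.1, by positivity⟩, ⟨by linarith, ?_⟩⟩
          have hsumid : 2*(n:ℝ)/((n:ℝ)+1) + 2/((n:ℝ)+1) = 2 := by
            field_simp
          have hxlt : x < 2*(n:ℝ)/((n:ℝ)+1) + 2/((n:ℝ)+1) := by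
            rw [hsumid]; exact hx.2
          linarith
        set τ : ℝ := (max 0 (x - 2/((n:ℝ)+1)) + min x (2*(n:ℝ)/((n:ℝ)+1))) / 2 with hτdef
        have hτ1 : max 0 (x - 2/((n:ℝ)+1)) < τ := by rw [hτdef]; linarith
        have hτ2 : τ < min x (2*(n:ℝ)/((n:ℝ)+1)) := by rw [hτdef]; linarith
        have hτpos : 0 < τ := lt_of_le_of_lt (le_max_left _ _) hτ1
        have hτlt : τ < 2*(n:ℝ)/((n:ℝ)+1) := lt_of_lt_of_le hτ2 (min_le_right _ _)
        have hcτ : τ * ((n:ℝ)+1) / (n:ℝ) - 1 ∈ Set.Ioo (-1:ℝ) 1 := by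
          constructor
          · have : 0 < τ * ((n:ℝ)+1) / (n:ℝ) := by positivity
            linarith
          · rw [sub_lt_iff_lt_add, div_lt_iff₀ hN]
            nlinarith [(lt_div_iff₀ hD).1 hτlt]
        set c : ℝ := Real.arccos (τ * ((n:ℝ)+1) / (n:ℝ) - 1) with hcdef
        have hcosc : Real.cos c = τ * ((n:ℝ)+1) / (n:ℝ) - 1 := by
          rw [hcdef]
          exact Real.cos_arccos (le_of_lt hcτ.1) (le_of_lt hcτ.2)
        have hcmem : c ∈ Set.Ioo (-π) π := by
          constructor
          · linarith [Real.arccos_nonneg (τ * ((n:ℝ)+1) / (n:ℝ) - 1), Real.pi_pos]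
          · refine lt_of_le_of_ne (Real.arccos_le_pi _) fun hc => ?_
            have hneg : Real.cos c = -1 := by rw [hc]; exact Real.cos_pi
            rw [hcosc] at hneg
            linarith [hcτ.1]
        refine ⟨fun _ => c, fun _ => hcmem, ?_⟩
        have hval : h' (fun _ => c) = τ := by
          rw [hh']
          simp only [Finset.sum_const, Finset.card_univ, Fintype.card_fin, nsmul_eq_mul]
          rw [hcosc]
          field_simp
          ring
        rw [hval]
        exact ⟨lt_of_le_of_lt (le_max_right _ _) hτ1,
          lt_of_lt_of_le hτ2 (min_le_left _ _)⟩
    have hVopen : IsOpen ((Set.univ.pi fun _ : Fin n => Set.Ioo (-π) π) ∩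
        h' ⁻¹' Set.Ioo (x - 2/((n:ℝ)+1)) x) :=
      (isOpen_set_pi Set.finite_univ fun _ _ => isOpen_Ioo).inter
        (isOpen_Ioo.preimage hh'c)
    have hVsub : (Set.univ.pi fun _ : Fin n => Set.Ioo (-π) π) ∩
        h' ⁻¹' Set.Ioo (x - 2/((n:ℝ)+1)) x ⊆ T₀ := by
      rintro θ' ⟨h1, h2⟩
      exact ⟨fun j _ => Set.Ioo_subset_Icc_self (h1 j (Set.mem_univ j)), h2⟩
    have hVne : ((Set.univ.pi fun _ : Fin n => Set.Ioo (-π) π) ∩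
        h' ⁻¹' Set.Ioo (x - 2/((n:ℝ)+1)) x).Nonempty :=
      ⟨p, fun j _ => hp1 j, hp2⟩
    exact lt_of_lt_of_le (hVopen.measure_pos volume hVne) (measure_mono hVsub)
  -- inner integral is ⊤ on T₀
  have hinner : ∀ θ' ∈ T₀, ∫⁻ a in Set.Icc (-π) π, G (a, θ') = ⊤ := by
    intro θ' hθ'
    have hmem : h' θ' ∈ Set.Ioo (x - 2/((n:ℝ)+1)) x := hθ'.2
    rw [Set.mem_Ioo] at hmem
    set y : ℝ := x - h' θ' with hy
    have hy1 : 0 < y := by rw [hy]; linarith [hmem.2]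
    have hy2 : y < 2/((n:ℝ)+1) := by rw [hy]; linarith [hmem.1]
    have hcy : ((n:ℝ)+1) * y - 1 ∈ Set.Ioo (-1:ℝ) 1 := by
      constructor
      · nlinarith
      · rw [lt_div_iff₀ hD] at hy2
        linarith
    set t : ℝ := Real.arccos (((n:ℝ)+1) * y - 1) with htdef
    have hcost : Real.cos t = ((n:ℝ)+1) * y - 1 := by
      rw [htdef]
      exact Real.cos_arccos (le_of_lt hcy.1) (le_of_lt hcy.2)
    have ht : t ∈ Set.Ioo 0 π := by
      constructor
      · exact Real.arccos_pos.2 hcy.2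
      · refine lt_of_le_of_ne (Real.arccos_le_pi _) fun hc => ?_
        have hneg : Real.cos t = -1 := by rw [hc]; exact Real.cos_pi
        rw [hcost] at hneg
        linarith [hcy.1]
    -- key algebraic identity
    have hgid : ∀ a : ℝ, gfun (n+1) (e.symm (a, θ')) - x
        = (Real.cos a - Real.cos t) / ((n:ℝ)+1) := by
      intro a
      rw [hesymm]
      have hsum : gfun (n+1) (Fin.cons a θ')
          = (1/((n:ℝ)+1)) * ((Real.cos a + 1) + ∑ j, (Real.cos (θ' j) + 1)) := by
        rw [gfun]
        rw [Fin.sum_univ_succ]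
        push_cast
        simp
      have hS : (∑ j, (Real.cos (θ' j) + 1)) = ((n:ℝ)+1) * (x - y) := by
        have hxy : x - y = h' θ' := by rw [hy]; ring
        have hform : h' θ' = (1/((n:ℝ)+1)) * ∑ j, (Real.cos (θ' j) + 1) := rfl
        rw [hxy, hform]
        field_simp
      rw [hsum, hcost, hS]
      field_simp
      ring
    rw [eq_top_iff]
    calc (⊤ : ℝ≥0∞) = ∫⁻ a in Set.Icc 0 π, ENNReal.ofReal (((a - t)⁻¹) ^ 2) :=
          (aux_one_dim t 0 π ht.1 ht.2).symm
      _ ≤ ∫⁻ a in Set.Icc 0 π, G (a, θ') := by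
          apply setLIntegral_mono
          · exact (hG.comp (measurable_id.prodMk measurable_const))
          intro a ha
          rw [hGdef]
          simp only
          apply ENNReal.ofReal_le_ofReal
          rcases eq_or_ne a t with rfl | hne
          · have hz : ((t - t)⁻¹ : ℝ)^2 = 0 := by
              simp
            rw [hz]
            positivity
          · have hcne : Real.cos a ≠ Real.cos t := fun hcc =>
              hne (Real.injOn_cos ⟨ha.1, ha.2⟩ ⟨le_of_lt ht.1, le_of_lt ht.2⟩ hcc)
            have hlip := cos_lip a t
            have habs1 : 0 < |(Real.cos a - Real.cos t) / ((n:ℝ)+1)| :=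
              abs_pos.2 (div_ne_zero (sub_ne_zero.2 hcne) (ne_of_gt hD))
            have habs2 : |(Real.cos a - Real.cos t) / ((n:ℝ)+1)| ≤ |a - t| := by
              rw [abs_div]
              calc |Real.cos a - Real.cos t| / |(n:ℝ)+1|
                  ≤ |Real.cos a - Real.cos t| := by
                    apply div_le_self (abs_nonneg _)
                    rw [abs_of_pos hD]; linarith [Nat.cast_nonneg (α := ℝ) n]
                _ ≤ |a - t| := hlip
            rw [hgid a]
            rw [← sq_abs ((a - t)⁻¹), ← sq_abs (((Real.cos a - Real.cos t) / ((n:ℝ)+1))⁻¹),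
              abs_inv, abs_inv]
            exact pow_le_pow_left₀ (by positivity) (inv_anti₀ habs1 habs2) 2
      _ ≤ ∫⁻ a in Set.Icc (-π) π, G (a, θ') :=
          lintegral_mono_set (Set.Icc_subset_Icc (by linarith [Real.pi_pos]) le_rfl)
  -- conclude
  rw [eq_top_iff]
  have hT₀sub : T₀ ⊆ torus n := Set.inter_subset_left
  calc (⊤ : ℝ≥0∞) = ⊤ * volume T₀ := (ENNReal.top_mul (ne_of_gt hT₀pos)).symm
    _ = ∫⁻ θ' in T₀, (⊤ : ℝ≥0∞) := (setLIntegral_const T₀ ⊤).symm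
    _ = ∫⁻ θ' in T₀, ∫⁻ a in Set.Icc (-π) π, G (a, θ') := by
        apply setLIntegral_congr_fun hT₀meas
        intro θ' hθ'
        exact (hinner θ' hθ').symm
    _ ≤ ∫⁻ θ' in torus n, ∫⁻ a in Set.Icc (-π) π, G (a, θ') :=
        lintegral_mono_set hT₀sub
end

section
/- Let H_v Φ = Ψ(g(θ))Φ + v(Ω,Φ)Ω on L²(T) with v ≠ 0. Then E ∈ ℝ is an eigenvalue of H_v if and only if ∫_T 1/(E - Ψ(g(θ)))² dθ < ∞, ∫_T 1/(E - Ψ(g(θ))) dθ ≠ 0, and v = (2π)^d (∫_T 1/(E - Ψ(g(θ))) dθ)^{-1}. -/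
open MeasureTheory Real Filter Set Topology

/-- `E` is an eigenvalue of `H_v = Ψ(g(θ))· + v (Ω, ·) Ω` on `L²(T)`,
where `Ω = (2π)^{-d/2} 𝟙`. -/
def IsEigen (d : ℕ) (Ψ : ℝ → ℝ) (v E : ℝ) : Prop :=
  ∃ Φ : (Fin d → ℝ) → ℝ,
    MemLp Φ 2 (volume.restrict (torus d)) ∧
    ¬ Φ =ᵐ[volume.restrict (torus d)] (fun _ => (0 : ℝ)) ∧
    (fun θ => Ψ (gfun d θ) * Φ θ +
        v * (∫ x in torus d, (2 * π) ^ (-(d : ℝ) / 2) * Φ x) * (2 * π) ^ (-(d : ℝ) / 2))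
      =ᵐ[volume.restrict (torus d)] (fun θ => E * Φ θ)

lemma cos_level_null (a : ℝ) : (volume : Measure ℝ) {x : ℝ | Real.cos x = a} = 0 := by
  rcases le_or_gt |a| 1 with h | h
  · have hsub : {x : ℝ | Real.cos x = a} ⊆ ⋃ k : ℤ,
        ({2 * k * π + Real.arccos a, 2 * k * π - Real.arccos a} : Set ℝ) := by
      intro x hx
      have hx' : Real.cos (Real.arccos a) = Real.cos x := by
        rw [Real.cos_arccos (abs_le.1 h).1 (abs_le.1 h).2]; exact hx.symm
      rw [Real.cos_eq_cos_iff] at hx'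
      obtain ⟨k, hk | hk⟩ := hx'
      · exact mem_iUnion.2 ⟨k, by simp [hk]⟩
      · exact mem_iUnion.2 ⟨k, by simp [hk]⟩
    refine measure_mono_null hsub (measure_iUnion_null fun k => ?_)
    exact (Set.toFinite _).measure_zero _
  · have : {x : ℝ | Real.cos x = a} = ∅ := by
      ext x
      simp only [mem_setOf_eq, mem_empty_iff_false, iff_false]
      intro hx
      exact absurd (hx ▸ Real.abs_cos_le_one x) (not_le.2 h)
    rw [this, measure_empty]

lemma sum_cos_null (n : ℕ) (s : ℝ) :
    (volume : Measure (Fin (n + 1) → ℝ)) {θ | ∑ j, Real.cos (θ j) = s} = 0 := by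
  have hcont : Continuous fun p : ℝ × (Fin n → ℝ) => Real.cos p.1 + ∑ j, Real.cos (p.2 j) := by
    fun_prop
  set B : Set (ℝ × (Fin n → ℝ)) :=
    (fun p : ℝ × (Fin n → ℝ) => Real.cos p.1 + ∑ j, Real.cos (p.2 j)) ⁻¹' {s} with hB
  have hBm : MeasurableSet B := hcont.measurable (measurableSet_singleton s)
  have hpre : (MeasurableEquiv.piFinSuccAbove (fun _ : Fin (n + 1) => ℝ) 0) ⁻¹' B
      = {θ | ∑ j, Real.cos (θ j) = s} := by
    ext θ
    simp only [Set.mem_preimage, hB, Set.mem_setOf_eq, mem_singleton_iff,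
      MeasurableEquiv.piFinSuccAbove_apply, Fin.insertNthEquiv, Equiv.coe_fn_symm_mk,
      Fin.removeNth]
    rw [Fin.sum_univ_succAbove (fun j => Real.cos (θ j)) 0]
  have hmp := measurePreserving_piFinSuccAbove (fun _ : Fin (n + 1) => (volume : Measure ℝ)) 0
  rw [← hpre, volume_pi, hmp.measure_preimage hBm.nullMeasurableSet]
  rw [← Measure.prod_swap, Measure.map_apply measurable_swap hBm,
    Measure.measure_prod_null (measurable_swap hBm)]
  refine ae_of_all _ fun y => ?_
  have hsec : (Prod.mk y ⁻¹' (Prod.swap ⁻¹' B))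
      = {x : ℝ | Real.cos x = s - ∑ j, Real.cos (y j)} := by
    ext x
    simp only [Set.mem_preimage, hB, Prod.swap, mem_singleton_iff, Set.mem_setOf_eq]
    constructor <;> intro h <;> linarith
  show (volume : Measure ℝ) (Prod.mk y ⁻¹' (Prod.swap ⁻¹' B)) = 0
  rw [hsec]
  exact cos_level_null _

lemma gfun_nonneg (d : ℕ) (θ : Fin d → ℝ) : 0 ≤ gfun d θ := by
  unfold gfun
  apply mul_nonneg (by positivity)
  exact Finset.sum_nonneg fun j _ => by nlinarith [Real.neg_one_le_cos (θ j)]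

lemma gfun_level_null (n : ℕ) (t : ℝ) :
    (volume : Measure (Fin (n + 1) → ℝ)) {θ | gfun (n + 1) θ = t} = 0 := by
  have key : {θ : Fin (n + 1) → ℝ | gfun (n + 1) θ = t}
      = {θ | ∑ j, Real.cos (θ j) = ((n : ℝ) + 1) * t - ((n : ℝ) + 1)} := by
    ext θ
    simp only [mem_setOf_eq, gfun]
    rw [Finset.sum_add_distrib, Finset.sum_const, Finset.card_univ, Fintype.card_fin, nsmul_eq_mul]
    have hn : ((n : ℝ) + 1) ≠ 0 := by positivity
    push_cast
    constructor <;> intro h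
    · field_simp at h; linarith
    · field_simp; linarith
  rw [key]; exact sum_cos_null n _

lemma gfun_continuous (d : ℕ) : Continuous (gfun d) := by
  unfold gfun; fun_prop

lemma psi_level_null (n : ℕ) (Ψ : ℝ → ℝ)
    (hmono : StrictMonoOn Ψ (Set.Ioi 0)) (E : ℝ) :
    (volume : Measure (Fin (n + 1) → ℝ)) {θ | Ψ (gfun (n + 1) θ) = E} = 0 := by
  by_cases hS : ∃ t : ℝ, 0 < t ∧ Ψ t = E
  · obtain ⟨t₀, ht₀, hEt⟩ := hS
    have hsub : {θ : Fin (n + 1) → ℝ | Ψ (gfun (n + 1) θ) = E}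
        ⊆ {θ | gfun (n + 1) θ = 0} ∪ {θ | gfun (n + 1) θ = t₀} := by
      intro θ hθ
      rcases eq_or_lt_of_le (gfun_nonneg (n + 1) θ) with h0 | hpos
      · exact Or.inl h0.symm
      · exact Or.inr (hmono.injOn hpos ht₀ (hθ.trans hEt.symm))
    refine measure_mono_null hsub (measure_union_null ?_ ?_) <;> exact gfun_level_null n _
  · have hsub : {θ : Fin (n + 1) → ℝ | Ψ (gfun (n + 1) θ) = E}
        ⊆ {θ | gfun (n + 1) θ = 0} := by
      intro θ hθ
      rcases eq_or_lt_of_le (gfun_nonneg (n + 1) θ) with h0 | hpos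
      · exact h0.symm
      · exact absurd ⟨_, hpos, hθ⟩ hS
    exact measure_mono_null hsub (gfun_level_null n 0)


/-- Eigenvalue criterion: `E` is an eigenvalue of `H_v` iff `∫_T (E - Ψ∘g)⁻² dθ < ∞`,
`∫_T (E - Ψ∘g)⁻¹ dθ ≠ 0` and `v = (2π)^d (∫_T (E - Ψ∘g)⁻¹ dθ)⁻¹`. -/
theorem eigenvalue_criterion (d : ℕ) (hd : 1 ≤ d) (Ψ : ℝ → ℝ)
    (hΨ : ContDiffOn ℝ 1 Ψ (Set.Ioi 0))
    (hΨ' : ∀ x ∈ Set.Ioi (0 : ℝ), 0 < derivWithin Ψ (Set.Ioi 0) x)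
    (v : ℝ) (hv : v ≠ 0) (E : ℝ) :
    IsEigen d Ψ v E ↔
      (IntegrableOn (fun θ => ((E - Ψ (gfun d θ))⁻¹) ^ 2) (torus d) ∧
       (∫ θ in torus d, (E - Ψ (gfun d θ))⁻¹) ≠ 0 ∧
       v = (2 * π) ^ d * (∫ θ in torus d, (E - Ψ (gfun d θ))⁻¹)⁻¹) := by
  obtain ⟨n, rfl⟩ : ∃ n, d = n + 1 := ⟨d - 1, (Nat.succ_pred_eq_of_pos hd).symm⟩
  set d := n + 1 with hddef
  -- basic objects
  have h2π : (0 : ℝ) < 2 * π := by positivity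
  set k : ℝ := (2 * π) ^ (-(d : ℝ) / 2) with hkdef
  have hk : k * k = ((2 * π : ℝ) ^ d)⁻¹ := by
    rw [hkdef, ← Real.rpow_add h2π, ← Real.rpow_natCast (2 * π) d,
      ← Real.rpow_neg h2π.le]
    ring_nf
  have h2d : ((2 * π : ℝ) ^ d) ≠ 0 := by positivity
  -- monotonicity of Ψ
  have hmono : StrictMonoOn Ψ (Set.Ioi 0) := by
    apply strictMonoOn_of_hasDerivWithinAt_pos (convex_Ioi 0) hΨ.continuousOn
      (f' := fun x => derivWithin Ψ (Set.Ioi 0) x)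
    · intro x hx
      rw [interior_Ioi] at hx ⊢
      exact ((hΨ.differentiableOn one_ne_zero) x hx).hasDerivWithinAt
    · intro x hx
      rw [interior_Ioi] at hx
      exact hΨ' x hx
  -- finiteness of the measure
  have hTc : IsCompact (torus d) := isCompact_univ_pi fun _ => isCompact_Icc
  haveI : IsFiniteMeasure (volume.restrict (torus d)) :=
    ⟨by rw [Measure.restrict_apply_univ]; exact hTc.measure_lt_top⟩
  -- a.e. non-level
  have h_ae : ∀ᵐ θ ∂(volume.restrict (torus d)), Ψ (gfun d θ) ≠ E := by
    apply ae_restrict_of_ae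
    rw [ae_iff]
    simpa using psi_level_null n Ψ hmono E
  -- measurability of Ψ ∘ g on the torus
  have haem : AEMeasurable (fun θ => Ψ (gfun d θ)) (volume.restrict (torus d)) := by
    set U : Set (Fin d → ℝ) := {θ | 0 < gfun d θ} with hU
    have hUopen : IsOpen U := isOpen_lt continuous_const (gfun_continuous d)
    have hgU : ContinuousOn (fun θ => Ψ (gfun d θ)) U :=
      hΨ.continuousOn.comp (gfun_continuous d).continuousOn fun θ hθ => hθ
    have hsub : torus d \ (torus d ∩ U) ⊆ {θ : Fin d → ℝ | gfun d θ = 0} := by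
      intro θ hθ
      simp only [mem_diff, mem_inter_iff, not_and] at hθ
      have h2 := hθ.2 hθ.1
      simp only [hU, mem_setOf_eq, not_lt] at h2
      exact le_antisymm h2 (gfun_nonneg d θ)
    have haes : (torus d : Set (Fin d → ℝ)) =ᵐ[volume] ((torus d ∩ U : Set (Fin d → ℝ))) := by
      rw [ae_eq_set]
      refine ⟨measure_mono_null hsub (gfun_level_null n 0), ?_⟩
      rw [Set.diff_eq_empty.2 Set.inter_subset_left, measure_empty]
    rw [Measure.restrict_congr_set haes]
    exact (hgU.aemeasurable hUopen.measurableSet).mono_measure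
      (Measure.restrict_mono inter_subset_right le_rfl)
  have hΦm : AEStronglyMeasurable (fun θ => (E - Ψ (gfun d θ))⁻¹)
      (volume.restrict (torus d)) :=
    ((aemeasurable_const.sub haem).inv).aestronglyMeasurable
  constructor
  · -- forward
    rintro ⟨Φ, hΦ2, hΦne, heq⟩
    set J := ∫ θ in torus d, (E - Ψ (gfun d θ))⁻¹ with hJdef
    set c : ℝ := v * (∫ x in torus d, k * Φ x) * k with hcdef
    clear_value c
    have h1 : ∀ᵐ θ ∂(volume.restrict (torus d)), Φ θ = c * (E - Ψ (gfun d θ))⁻¹ := by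
      filter_upwards [heq, h_ae] with θ hθ hΨne
      have hne : E - Ψ (gfun d θ) ≠ 0 := sub_ne_zero.2 (Ne.symm hΨne)
      field_simp
      linear_combination -hθ
    have hc : c ≠ 0 := by
      intro h0
      apply hΦne
      filter_upwards [h1] with θ hθ
      simp [hθ, h0]
    have hsq : Integrable (fun θ => Φ θ ^ 2) (volume.restrict (torus d)) :=
      (memLp_two_iff_integrable_sq hΦ2.aestronglyMeasurable).1 hΦ2
    have hIint : IntegrableOn (fun θ => ((E - Ψ (gfun d θ))⁻¹) ^ 2) (torus d) := by
      have hcong : (fun θ => ((E - Ψ (gfun d θ))⁻¹) ^ 2)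
          =ᵐ[volume.restrict (torus d)] fun θ => (c ^ 2)⁻¹ * Φ θ ^ 2 := by
        filter_upwards [h1] with θ hθ
        rw [hθ]
        field_simp
      exact ((hsq.const_mul ((c ^ 2)⁻¹)).congr hcong.symm)
    have hIΦ : (∫ θ in torus d, Φ θ) = c * J := by
      rw [integral_congr_ae h1, integral_const_mul]
    have hceq : c = v * (k * (c * J)) * k := by
      conv_lhs => rw [hcdef]
      rw [integral_const_mul, hIΦ]
    have hvkJ : v * (k * k) * J = 1 := by
      have h2 : c * (v * (k * k) * J) = c * 1 := by
        rw [mul_one]; linear_combination -hceq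
      exact mul_left_cancel₀ hc h2
    have hJne : J ≠ 0 := by
      intro h0
      rw [h0, mul_zero] at hvkJ
      exact one_ne_zero hvkJ.symm
    refine ⟨hIint, hJne, ?_⟩
    rw [hk] at hvkJ
    field_simp at hvkJ ⊢
    linarith
  · -- backward
    rintro ⟨hint, hJ, hvEq⟩
    set J := ∫ θ in torus d, (E - Ψ (gfun d θ))⁻¹ with hJdef
    refine ⟨fun θ => (E - Ψ (gfun d θ))⁻¹, ?_, ?_, ?_⟩
    · exact (memLp_two_iff_integrable_sq hΦm).2 hint
    · intro hc
      apply hJ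
      rw [hJdef, integral_congr_ae hc, integral_zero]
    · have hC : v * (∫ x in torus d, k * (E - Ψ (gfun d x))⁻¹) * k = 1 := by
        rw [integral_const_mul, ← hJdef, hvEq]
        calc (2 * π) ^ d * J⁻¹ * (k * J) * k
            = ((2 * π) ^ d * (k * k)) * (J⁻¹ * J) := by ring
          _ = 1 := by rw [hk, inv_mul_cancel₀ hJ, mul_inv_cancel₀ h2d, one_mul]
      filter_upwards [h_ae] with θ hθ
      have hne : E - Ψ (gfun d θ) ≠ 0 := sub_ne_zero.2 (Ne.symm hθ)
      show Ψ (gfun d θ) * (E - Ψ (gfun d θ))⁻¹ +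
          v * (∫ x in torus d, k * (E - Ψ (gfun d x))⁻¹) * k
          = E * (E - Ψ (gfun d θ))⁻¹
      rw [hC]
      have h1 : (E - Ψ (gfun d θ)) * (E - Ψ (gfun d θ))⁻¹ = 1 := mul_inv_cancel₀ hne
      linear_combination -h1
end
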